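/- For all half-integers J and K with J ≠ K and K ≠ 0, one has (2J+1)/((2K+1)(2|J−K|+1)) ≤ 3/4, with equality when J = 1 and K = 1/2. -/
import Mathlib


/-- For all half-integers `J ≠ K` with `K ≠ 0` (parametrized by `a = 2J`, `b = 2K`,
so that `2J+1 = a+1`, `2K+1 = b+1` and `2|J-K|+1 = |a-b|+1`), the single-copy Bell
state conversion fidelity satisfies `(2J+1)/((2K+1)(2|J-K|+1)) ≤ 3/4`, with
equality at `J = 1, K = 1/2` (i.e. `a = 2, b = 1`). -/
theorem fidelity_le_three_quarters :
    (∀ a b : ℕ, a ≠ b → b ≠ 0 →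
      ((a : ℝ) + 1) / (((b : ℝ) + 1) * (|(a : ℝ) - (b : ℝ)| + 1)) ≤ 3 / 4)
    ∧ ((2 : ℝ) + 1) / (((1 : ℝ) + 1) * (|(2 : ℝ) - (1 : ℝ)| + 1)) = 3 / 4 := by
  constructor
  · intro a b hab hb
    have hb1 : (1 : ℝ) ≤ (b : ℝ) := by exact_mod_cast Nat.one_le_iff_ne_zero.mpr hb
    rcases lt_or_gt_of_ne hab with h | h
    · -- a < b
      have h' : (a : ℝ) + 1 ≤ (b : ℝ) := by exact_mod_cast h
      have habs : |(a : ℝ) - (b : ℝ)| = (b : ℝ) - (a : ℝ) := by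
        rw [abs_sub_comm]; exact abs_of_nonneg (by linarith)
      rw [habs, div_le_iff₀ (by nlinarith)]
      nlinarith [Nat.cast_nonneg (α := ℝ) a]
    · -- b < a
      have h' : (b : ℝ) + 1 ≤ (a : ℝ) := by exact_mod_cast h
      have habs : |(a : ℝ) - (b : ℝ)| = (a : ℝ) - (b : ℝ) := abs_of_nonneg (by linarith)
      rw [habs, div_le_iff₀ (by nlinarith)]
      nlinarith [mul_nonneg (sub_nonneg.mpr hb1) (sub_nonneg.mpr h')]
  · norm_num
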